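/- Let d be a positive integer and let λ(t) = Σ_{i=0}^{2d} a_i t^i be a polynomial with integer coefficients satisfying the symmetry a_i = a_{2d-i} for all 0 ≤ i ≤ 2d, and suppose λ(1) is odd. Then (-1)^d · λ(1) · λ(-1) ≡ 1 (mod 4). -/

import Mathlib

lemma sum_split_helper (d : ℕ) (f : ℕ → ℤ) :
    ∑ i ∈ Finset.range (2 * d + 1), f i =
      f d + ∑ i ∈ Finset.range d, (f i + f (2 * d - i)) := by
  have h : 2 * d + 1 = (d + 1) + d := by omega
  rw [h, Finset.sum_range_add, Finset.sum_range_succ]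
  have hr : ∑ i ∈ Finset.range d, f (d + 1 + i)
      = ∑ i ∈ Finset.range d, f (2 * d - i) := by
    rw [← Finset.sum_range_reflect (fun i => f (d + 1 + i)) d]
    apply Finset.sum_congr rfl
    intro i hi
    simp only [Finset.mem_range] at hi
    congr 1
    omega
  rw [hr, Finset.sum_add_distrib]
  ring

theorem symmetric_poly_mod_four (d : ℕ) (hd : 0 < d) (a : ℕ → ℤ)
    (hsym : ∀ i ≤ 2 * d, a i = a (2 * d - i))
    (hodd : Odd (∑ i ∈ Finset.range (2 * d + 1), a i)) :
    Int.ModEq 4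
      ((-1 : ℤ) ^ d * (∑ i ∈ Finset.range (2 * d + 1), a i) *
        (∑ i ∈ Finset.range (2 * d + 1), a i * (-1 : ℤ) ^ i)) 1 := by
  set A : ℤ := ∑ i ∈ Finset.range d, a i with hA
  set B : ℤ := ∑ i ∈ Finset.range d, a i * (-1 : ℤ) ^ i with hB
  have h1 : ∑ i ∈ Finset.range (2 * d + 1), a i = a d + 2 * A := by
    rw [sum_split_helper d a, hA, Finset.mul_sum]
    congr 1
    apply Finset.sum_congr rfl
    intro i hi
    simp only [Finset.mem_range] at hi
    rw [← hsym i (by omega)]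
    ring
  have h2 : ∑ i ∈ Finset.range (2 * d + 1), a i * (-1 : ℤ) ^ i
      = a d * (-1 : ℤ) ^ d + 2 * B := by
    rw [sum_split_helper d (fun i => a i * (-1 : ℤ) ^ i), hB, Finset.mul_sum]
    congr 1
    apply Finset.sum_congr rfl
    intro i hi
    simp only [Finset.mem_range] at hi
    have he : (-1 : ℤ) ^ (2 * d - i) = (-1 : ℤ) ^ i := by
      have : 2 * d - i = i + 2 * (d - i) := by omega
      rw [this, pow_add, pow_mul, neg_one_sq, one_pow, mul_one]
    rw [he, ← hsym i (by omega)]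
    ring
  rw [h1] at hodd
  obtain ⟨k, hk⟩ := hodd
  have hc : a d = 2 * (k - A) + 1 := by linarith
  have hAB : (2 : ℤ) ∣ (A - B) := by
    rw [hA, hB, ← Finset.sum_sub_distrib]
    apply Finset.dvd_sum
    intro i _
    rcases Nat.even_or_odd i with he | ho
    · rw [he.neg_one_pow]; simp
    · rw [ho.neg_one_pow]; exact ⟨a i, by ring⟩
  obtain ⟨m, hm⟩ := hAB
  have hB' : B = A - 2 * m := by linarith
  rw [h1, h2]
  rcases Nat.even_or_odd d with hde | hdo
  · rw [hde.neg_one_pow]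
    refine Int.modEq_iff_dvd.mpr ⟨-((k - A + A) * (k - A + A + 1) - m * (2 * (k - A) + 1 + 2 * A)), ?_⟩
    rw [hc, hB']; ring
  · rw [hdo.neg_one_pow]
    refine Int.modEq_iff_dvd.mpr ⟨-((k - A) * (k - A) + (k - A) - A * A + m * (2 * (k - A) + 1) + 2 * m * A), ?_⟩
    rw [hc, hB']; ring
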